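/- Let h : [0,1] → [0,1] be three times continuously differentiable at p₀ ∈ (0,1) with h'(p₀) > 0. Then as ε → 0⁺, (1/2) · ((h(p₀) - h(p₀-ε)) - (h(p₀+ε) - h(p₀))) / (h(p₀+ε) - h(p₀-ε)) = -(ε/4) · h''(p₀)/h'(p₀) + o(ε²). -/

import Mathlib

open Set Filter Asymptotics

/-- Integration step for Peano remainders: if `F 0 = 0`, `F` has derivative `F'` near `0`,
and `F' = o(x^n)`, then `F = o(x^(n+1))`. -/
lemma littleO_of_deriv_littleO {F F' : ℝ → ℝ} {n : ℕ} (h0 : F 0 = 0)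
    (hd : ∀ᶠ x in nhds (0:ℝ), HasDerivAt F (F' x) x)
    (ho : F' =o[nhds (0:ℝ)] fun x => x ^ n) :
    F =o[nhds (0:ℝ)] fun x => x ^ (n + 1) := by
  rw [isLittleO_iff] at ho ⊢
  intro c hc
  have key := hd.and (ho hc)
  rw [Metric.eventually_nhds_iff] at key ⊢
  obtain ⟨δ, hδ, hkey⟩ := key
  refine ⟨δ, hδ, fun {x} hx => ?_⟩
  simp only [Real.dist_eq, sub_zero] at hx hkey
  have habs : ∀ t : ℝ, |t| ≤ |x| → HasDerivAt F (F' t) t ∧ ‖F' t‖ ≤ c * |x| ^ n := by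
    intro t ht
    obtain ⟨h1, h2⟩ := hkey (lt_of_le_of_lt ht hx)
    refine ⟨h1, h2.trans ?_⟩
    have : ‖t ^ n‖ ≤ |x| ^ n := by
      rw [norm_pow, Real.norm_eq_abs]; exact pow_le_pow_left₀ (abs_nonneg t) ht n
    nlinarith [norm_nonneg (t ^ n), hc.le]
  have hxgoal : ‖F x‖ ≤ c * |x| ^ n * |x| := by
    rcases le_total 0 x with hx0 | hx0
    · have := norm_image_sub_le_of_norm_deriv_le_segment'
        (f := F) (f' := F') (a := 0) (b := x) (C := c * |x| ^ n)
        (fun t ht => ((habs t (by rw [abs_of_nonneg ht.1, abs_of_nonneg hx0]; exact ht.2)).1).hasDerivWithinAt)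
        (fun t ht => (habs t (by rw [abs_of_nonneg ht.1, abs_of_nonneg hx0]; exact ht.2.le)).2)
        x (right_mem_Icc.mpr hx0)
      rw [h0, sub_zero] at this
      calc ‖F x‖ ≤ c * |x| ^ n * (x - 0) := this
        _ = c * |x| ^ n * |x| := by rw [sub_zero, abs_of_nonneg hx0]
    · have := norm_image_sub_le_of_norm_deriv_le_segment'
        (f := F) (f' := F') (a := x) (b := 0) (C := c * |x| ^ n)
        (fun t ht => ((habs t (by rw [abs_of_nonpos (ht.2), abs_of_nonpos hx0]; linarith [ht.1])).1).hasDerivWithinAt)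
        (fun t ht => (habs t (by rw [abs_of_nonpos (le_of_lt ht.2), abs_of_nonpos hx0]; linarith [ht.1])).2)
        0 (right_mem_Icc.mpr hx0)
      rw [h0] at this
      rw [← norm_neg, ← zero_sub]
      calc ‖(0:ℝ) - F x‖ ≤ c * |x| ^ n * (0 - x) := this
        _ = c * |x| ^ n * |x| := by rw [zero_sub, abs_of_nonpos hx0]
  calc ‖F x‖ ≤ c * |x| ^ n * |x| := hxgoal
    _ = c * ‖x ^ (n + 1)‖ := by rw [norm_pow, Real.norm_eq_abs]; ring

/-- Third-order Taylor expansion with Peano remainder, for `ContDiffAt ℝ 3`. -/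
lemma peano3 {h : ℝ → ℝ} {p₀ : ℝ} (hC : ContDiffAt ℝ 3 h p₀) :
    (fun x : ℝ => h (p₀ + x) - (h p₀ + deriv h p₀ * x + deriv (deriv h) p₀ * x ^ 2 / 2
        + deriv (deriv (deriv h)) p₀ * x ^ 3 / 6)) =o[nhds 0] fun x => x ^ 3 := by
  obtain ⟨u, hu, hcd⟩ := hC.contDiffOn le_rfl (by norm_num)
  obtain ⟨s, hsu, hso, hps⟩ := mem_nhds_iff.mp hu
  have hs : ContDiffOn ℝ 3 h s := hcd.mono hsu
  have hs1 : ContDiffOn ℝ 2 (deriv h) s := hs.deriv_of_isOpen hso (by norm_num)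
  have hs2 : ContDiffOn ℝ 1 (deriv (deriv h)) s := hs1.deriv_of_isOpen hso (by norm_num)
  have hshift : Filter.Tendsto (fun x : ℝ => p₀ + x) (nhds 0) (nhds p₀) := by
    simpa using (continuous_add_left p₀).tendsto (0:ℝ)
  have hmem : ∀ᶠ x in nhds (0:ℝ), p₀ + x ∈ s :=
    hshift.eventually (hso.eventually_mem hps)
  -- base case: second derivative
  have hdd : DifferentiableAt ℝ (deriv (deriv h)) p₀ :=
    (hs2.differentiableOn one_ne_zero).differentiableAt (hso.mem_nhds hps)
  have hbase := hasDerivAt_iff_isLittleO.mp hdd.hasDerivAt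
  have hG2 : (fun x : ℝ => deriv (deriv h) (p₀ + x)
      - (deriv (deriv h) p₀ + deriv (deriv (deriv h)) p₀ * x)) =o[nhds 0] fun x => x ^ 1 := by
    have := hbase.comp_tendsto hshift
    refine this.congr (fun x => ?_) (fun x => by simp only [Function.comp_def]; ring)
    simp only [Function.comp_def, smul_eq_mul]; ring
  -- first derivative
  have hd1 : ∀ᶠ x in nhds (0:ℝ), HasDerivAt
      (fun x : ℝ => deriv h (p₀ + x) - (deriv h p₀ + deriv (deriv h) p₀ * x
        + deriv (deriv (deriv h)) p₀ * x ^ 2 / 2))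
      (deriv (deriv h) (p₀ + x) - (deriv (deriv h) p₀ + deriv (deriv (deriv h)) p₀ * x)) x := by
    filter_upwards [hmem] with x hx
    have A : HasDerivAt (deriv h) (deriv (deriv h) (p₀ + x)) (p₀ + x) :=
      (((hs1.differentiableOn (by norm_num)).differentiableAt (hso.mem_nhds hx))).hasDerivAt
    have B : HasDerivAt (fun x : ℝ => deriv h (p₀ + x)) (deriv (deriv h) (p₀ + x)) x := by
      simpa [Function.comp_def] using A.comp x ((hasDerivAt_id x).const_add p₀)
    have C : HasDerivAt (fun x : ℝ => deriv h p₀ + deriv (deriv h) p₀ * x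
        + deriv (deriv (deriv h)) p₀ * x ^ 2 / 2)
        (deriv (deriv h) p₀ + deriv (deriv (deriv h)) p₀ * x) x := by
      have h2 := ((hasDerivAt_pow 2 x).const_mul (deriv (deriv (deriv h)) p₀)).div_const 2
      have h1 := ((hasDerivAt_id x).const_mul (deriv (deriv h) p₀)).const_add (deriv h p₀)
      convert h1.add h2 using 1
      · rfl
      · rfl
      · funext y; simp
      · simp; ring
    exact B.sub C
  have hG1 : (fun x : ℝ => deriv h (p₀ + x) - (deriv h p₀ + deriv (deriv h) p₀ * x
      + deriv (deriv (deriv h)) p₀ * x ^ 2 / 2)) =o[nhds 0] fun x => x ^ 2 :=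
    littleO_of_deriv_littleO (by simp) hd1 hG2
  -- the function itself
  have hd0 : ∀ᶠ x in nhds (0:ℝ), HasDerivAt
      (fun x : ℝ => h (p₀ + x) - (h p₀ + deriv h p₀ * x + deriv (deriv h) p₀ * x ^ 2 / 2
        + deriv (deriv (deriv h)) p₀ * x ^ 3 / 6))
      (deriv h (p₀ + x) - (deriv h p₀ + deriv (deriv h) p₀ * x
        + deriv (deriv (deriv h)) p₀ * x ^ 2 / 2)) x := by
    filter_upwards [hmem] with x hx
    have A : HasDerivAt h (deriv h (p₀ + x)) (p₀ + x) :=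
      (((hs.differentiableOn (by norm_num)).differentiableAt (hso.mem_nhds hx))).hasDerivAt
    have B : HasDerivAt (fun x : ℝ => h (p₀ + x)) (deriv h (p₀ + x)) x := by
      simpa [Function.comp_def] using A.comp x ((hasDerivAt_id x).const_add p₀)
    have C : HasDerivAt (fun x : ℝ => h p₀ + deriv h p₀ * x + deriv (deriv h) p₀ * x ^ 2 / 2
        + deriv (deriv (deriv h)) p₀ * x ^ 3 / 6)
        (deriv h p₀ + deriv (deriv h) p₀ * x + deriv (deriv (deriv h)) p₀ * x ^ 2 / 2) x := by
      have h3 := ((hasDerivAt_pow 3 x).const_mul (deriv (deriv (deriv h)) p₀)).div_const 6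
      have h2 := ((hasDerivAt_pow 2 x).const_mul (deriv (deriv h) p₀)).div_const 2
      have h1 := ((hasDerivAt_id x).const_mul (deriv h p₀)).const_add (h p₀)
      convert (h1.add h2).add h3 using 1
      · rfl
      · rfl
      · funext y; simp
      · simp; ring
    exact B.sub C
  exact littleO_of_deriv_littleO (by simp) hd0 hG1

/-- Local approximation of the DT risk premium: ρ(ε) = -(ε/4)·h''(p₀)/h'(p₀) + o(ε²). -/
theorem dt_risk_premium_local
    (h : ℝ → ℝ) (p₀ : ℝ) (hp : p₀ ∈ Ioo (0:ℝ) 1)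
    (hmap : ∀ p ∈ Icc (0:ℝ) 1, h p ∈ Icc (0:ℝ) 1)
    (hC : ContDiffAt ℝ 3 h p₀)
    (hd : 0 < deriv h p₀) :
    (fun ε : ℝ =>
        (1/2) * ((h p₀ - h (p₀ - ε)) - (h (p₀ + ε) - h p₀)) /
          (h (p₀ + ε) - h (p₀ - ε))
        + ε / 4 * (deriv (deriv h) p₀ / deriv h p₀))
      =o[nhdsWithin 0 (Ioi 0)] (fun ε : ℝ => ε ^ 2) := by
  set c0 := h p₀ with hc0
  set c1 := deriv h p₀ with hc1
  set c2 := deriv (deriv h) p₀ with hc2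
  set c3 := deriv (deriv (deriv h)) p₀ with hc3
  set G0 : ℝ → ℝ := fun x => h (p₀ + x) - (c0 + c1 * x + c2 * x ^ 2 / 2 + c3 * x ^ 3 / 6)
    with hG0def
  have hG0 : G0 =o[nhds 0] fun x : ℝ => x ^ 3 := peano3 hC
  -- composition with negation
  have hnegt : Filter.Tendsto (fun ε : ℝ => -ε) (nhds 0) (nhds 0) := by
    simpa using (continuous_neg.tendsto (0:ℝ))
  have hneg : (fun ε : ℝ => G0 (-ε)) =o[nhds 0] fun ε : ℝ => ε ^ 3 := by
    have h1 := hG0.comp_tendsto hnegt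
    have e : (fun ε : ℝ => (-ε) ^ 3) = fun ε : ℝ => -(ε ^ 3) := by funext ε; ring
    simp only [Function.comp_def] at h1
    rw [e] at h1
    exact h1.trans_isBigO (isBigO_refl (fun ε : ℝ => ε ^ 3) _).neg_left
  have hcube : (fun ε : ℝ => ε ^ 3) =o[nhds (0:ℝ)] fun ε => ε ^ 2 := by
    have h1 : (fun ε : ℝ => ε) =o[nhds (0:ℝ)] (fun _ => (1:ℝ)) := isLittleO_id_one
    have h2 := h1.mul_isBigO (isBigO_refl (fun ε : ℝ => ε ^ 2) (nhds 0))
    refine (h2.congr (fun x => by ring) (fun x => by ring))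
  -- the odd part
  have hBo : (fun ε : ℝ => G0 ε - G0 (-ε) + c3 * ε ^ 3 / 3) =o[nhds 0] fun ε : ℝ => ε ^ 2 := by
    refine ((hG0.trans hcube).sub (hneg.trans hcube)).add ?_
    refine (hcube.const_mul_left (c3 / 3)).congr (fun x => by ring) (fun x => rfl)
  -- the key numerator
  have hK : (fun ε : ℝ => -2 * (G0 ε + G0 (-ε))
      + c2 / c1 * (ε * (G0 ε - G0 (-ε) + c3 * ε ^ 3 / 3))) =o[nhds 0] fun ε : ℝ => ε ^ 3 := by
    refine ((hG0.add hneg).const_mul_left (-2)).add ?_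
    have h2 := (isBigO_refl (fun ε : ℝ => ε) (nhds 0)).mul_isLittleO hBo
    have e : (fun ε : ℝ => ε * ε ^ 2) = fun ε : ℝ => ε ^ 3 := by funext ε; ring
    rw [e] at h2
    exact h2.const_mul_left (c2 / c1)
  rw [isLittleO_iff]
  intro c' hc'
  have hKb := hK.def (show (0:ℝ) < 4 * c1 * c' by positivity)
  have hBb := hBo.def hd
  have hlt1 : ∀ᶠ ε in nhds (0:ℝ), ε < 1 := by
    filter_upwards [Iio_mem_nhds (show (0:ℝ) < 1 by norm_num)] with ε hε; exact hε
  filter_upwards [nhdsWithin_le_nhds hKb, nhdsWithin_le_nhds hBb, self_mem_nhdsWithin,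
    nhdsWithin_le_nhds hlt1] with ε hK1 hB1 hε hlt
  have hεpos : 0 < ε := hε
  simp only [hG0def, Real.norm_eq_abs] at hK1 hB1 ⊢
  rw [show p₀ + -ε = p₀ - ε by ring] at hK1 hB1
  have habs2 : |ε ^ 2| = ε ^ 2 := abs_of_nonneg (by positivity)
  have habs3 : |ε ^ 3| = ε ^ 3 := abs_of_nonneg (by positivity)
  rw [habs2] at hB1
  rw [habs3] at hK1
  rw [habs2]
  set hp' := h (p₀ + ε) with hhp
  set hm' := h (p₀ - ε) with hhm
  have hBrel : hp' - hm' - 2 * c1 * ε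
      = hp' - (c0 + c1 * ε + c2 * ε ^ 2 / 2 + c3 * ε ^ 3 / 6)
        - (hm' - (c0 + c1 * -ε + c2 * (-ε) ^ 2 / 2 + c3 * (-ε) ^ 3 / 6))
        + c3 * ε ^ 3 / 3 := by ring
  have hB2 : |hp' - hm' - 2 * c1 * ε| ≤ c1 * ε ^ 2 := by rw [hBrel]; exact hB1
  have hεle : c1 * ε ^ 2 ≤ c1 * ε := by
    have h1 : ε ^ 2 ≤ ε := by nlinarith [mul_pos hεpos (sub_pos.mpr hlt)]
    exact mul_le_mul_of_nonneg_left h1 hd.le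
  have hD : c1 * ε ≤ hp' - hm' := by
    have := abs_le.mp hB2
    nlinarith
  have hDpos : 0 < hp' - hm' := lt_of_lt_of_le (by positivity) hD
  have hc1ne : c1 ≠ 0 := ne_of_gt hd
  have hDne : hp' - hm' ≠ 0 := ne_of_gt hDpos
  have hEq : 1 / 2 * (c0 - hm' - (hp' - c0)) / (hp' - hm') + ε / 4 * (c2 / c1)
      = (-2 * (hp' - (c0 + c1 * ε + c2 * ε ^ 2 / 2 + c3 * ε ^ 3 / 6)
          + (hm' - (c0 + c1 * -ε + c2 * (-ε) ^ 2 / 2 + c3 * (-ε) ^ 3 / 6)))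
        + c2 / c1 * (ε * (hp' - (c0 + c1 * ε + c2 * ε ^ 2 / 2 + c3 * ε ^ 3 / 6)
          - (hm' - (c0 + c1 * -ε + c2 * (-ε) ^ 2 / 2 + c3 * (-ε) ^ 3 / 6))
          + c3 * ε ^ 3 / 3))) / (4 * (hp' - hm')) := by
    field_simp
    ring
  rw [hEq, abs_div, abs_of_pos (by linarith : (0:ℝ) < 4 * (hp' - hm'))]
  rw [div_le_iff₀ (by linarith : (0:ℝ) < 4 * (hp' - hm'))]
  calc |(-2 * (hp' - (c0 + c1 * ε + c2 * ε ^ 2 / 2 + c3 * ε ^ 3 / 6)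
          + (hm' - (c0 + c1 * -ε + c2 * (-ε) ^ 2 / 2 + c3 * (-ε) ^ 3 / 6)))
        + c2 / c1 * (ε * (hp' - (c0 + c1 * ε + c2 * ε ^ 2 / 2 + c3 * ε ^ 3 / 6)
          - (hm' - (c0 + c1 * -ε + c2 * (-ε) ^ 2 / 2 + c3 * (-ε) ^ 3 / 6))
          + c3 * ε ^ 3 / 3)))| ≤ 4 * c1 * c' * ε ^ 3 := hK1
    _ ≤ c' * ε ^ 2 * (4 * (hp' - hm')) := by
        nlinarith [mul_le_mul_of_nonneg_left hD (by positivity : (0:ℝ) ≤ 4 * c' * ε ^ 2)]
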